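/- Let q be a prime number, k the algebraic closure of 𝔽_q, and m ≥ 2, d ≥ 2 integers with q ∤ d. Let a = (a_1, …, a_{m−1}) ∈ k^{m−1} and assume the partial sums A_i = ∑_{k=i}^{m−1} a_k, for i = 1, …, m−1, are pairwise distinct and all nonzero. Let C = {y ∈ k^m : y_i^d − y_{i+1}^d = a_i for 1 ≤ i ≤ m−1}. If r = (r_1, …, r_m) ∈ k^m and c ∈ k are such that r_1 y_1 + ⋯ + r_m y_m = c for every y ∈ C, then r_1 = ⋯ = r_m = 0. -/
import Mathlib

open scoped BigOperators

/-- The polynomial `g_j = x_j^d − x_{j+1}^d − a_j` (0-indexed). -/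
noncomputable def gPoly {k : Type*} [CommRing k] (m d : ℕ) (a : Fin (m - 1) → k)
    (j : Fin (m - 1)) : MvPolynomial (Fin m) k :=
  MvPolynomial.X ⟨j.1, by have := j.isLt; omega⟩ ^ d -
    MvPolynomial.X ⟨j.1 + 1, by have := j.isLt; omega⟩ ^ d -
    MvPolynomial.C (a j)

/-- The partial sum `A_i = ∑_{k ≥ i} a_k`. -/
def partialSum {k : Type*} [AddCommMonoid k] {n : ℕ} (a : Fin n → k) (i : Fin n) : k :=
  ∑ t ∈ Finset.Ici i, a t

lemma partialSum_succ {k : Type*} [AddCommMonoid k] {n : ℕ} (a : Fin n → k) (j : Fin n) :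
    partialSum a j = a j + (if h : j.1 + 1 < n then partialSum a ⟨j.1 + 1, h⟩ else 0) := by
  unfold partialSum
  split_ifs with h
  · have hins : Finset.Ici j = insert j (Finset.Ici (⟨j.1 + 1, h⟩ : Fin n)) := by
      ext x
      simp only [Finset.mem_Ici, Finset.mem_insert, Fin.le_def]
      constructor
      · intro hx
        rcases eq_or_lt_of_le hx with h'|h'
        · left; exact Fin.ext h'.symm
        · right; omega
      · rintro (rfl|hx) <;> omega
    rw [hins, Finset.sum_insert (by simp [Fin.le_def])]
  · have hsing : Finset.Ici j = {j} := by
      ext x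
      simp only [Finset.mem_Ici, Finset.mem_singleton, Fin.le_def, Fin.ext_iff]
      have := x.isLt
      omega
    rw [hsing, Finset.sum_singleton, add_zero]

theorem statement16 (q : ℕ) [Fact q.Prime] (m d : ℕ) (hm : 2 ≤ m) (hd : 2 ≤ d)
    (hqd : ¬ q ∣ d) (a : Fin (m - 1) → AlgebraicClosure (ZMod q))
    (hinj : Function.Injective (partialSum a))
    (hne : ∀ i, partialSum a i ≠ 0)
    (r : Fin m → AlgebraicClosure (ZMod q)) (c : AlgebraicClosure (ZMod q))
    (hconst : ∀ y : Fin m → AlgebraicClosure (ZMod q),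
      (∀ i : Fin (m - 1),
        y ⟨i.1, by have := i.isLt; omega⟩ ^ d -
          y ⟨i.1 + 1, by have := i.isLt; omega⟩ ^ d = a i) →
      ∑ i : Fin m, r i * y i = c) :
    ∀ i, r i = 0 := by
  classical
  -- a nontrivial d-th root of unity
  have hNZ : NeZero ((d : AlgebraicClosure (ZMod q))) := ⟨fun h => hqd ((CharP.cast_eq_zero_iff (AlgebraicClosure (ZMod q)) q d).mp h)⟩
  obtain ⟨ζ, hζ⟩ := HasEnoughRootsOfUnity.exists_primitiveRoot (AlgebraicClosure (ZMod q)) d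
  have hζ1 : ζ ^ d = 1 := hζ.pow_eq_one
  have hζne : ζ ≠ 1 := hζ.ne_one (by omega)
  -- choose t avoiding finitely many bad values
  obtain ⟨t, ht⟩ := Infinite.exists_notMem_finset
    (insert (0 : AlgebraicClosure (ZMod q)) (Finset.image (fun j => -partialSum a j) Finset.univ))
  simp only [Finset.mem_insert, Finset.mem_image, Finset.mem_univ, true_and, not_or,
    not_exists] at ht
  -- the target d-th powers
  set u : Fin m → AlgebraicClosure (ZMod q) := fun i => if h : i.1 < m - 1 then t + partialSum a ⟨i.1, h⟩ else t
    with hu_def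
  have hu : ∀ i, u i ≠ 0 := by
    intro i
    simp only [hu_def]
    split_ifs with h
    · intro hzero
      exact ht.2 ⟨i.1, h⟩ (by linear_combination -hzero)
    · exact ht.1
  -- choose the point y on the curve
  choose y hy using fun i => IsAlgClosed.exists_pow_nat_eq (u i) (show 0 < d by omega)
  have hyne : ∀ i, y i ≠ 0 := by
    intro i h
    exact hu i (by rw [← hy i, h, zero_pow (by omega)])
  have heq : ∀ j : Fin (m - 1),
      y ⟨j.1, by have := j.isLt; omega⟩ ^ d - y ⟨j.1 + 1, by have := j.isLt; omega⟩ ^ d = a j := by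
    intro j
    rw [hy, hy]
    simp only [hu_def]
    have hj := j.isLt
    have hps := partialSum_succ a j
    rw [dif_pos (show j.1 < m - 1 from hj)]
    by_cases h1 : j.1 + 1 < m - 1
    · rw [dif_pos h1, hps, dif_pos h1]
      ring
    · rw [dif_neg h1, hps, dif_neg h1]
      ring
  intro i
  -- the modified point
  set y' : Fin m → AlgebraicClosure (ZMod q) := Function.update y i (ζ * y i) with hy'_def
  have h1 : ∀ w, y' w ^ d = y w ^ d := by
    intro w
    rcases eq_or_ne w i with rfl | hw
    · simp [hy'_def, mul_pow, hζ1]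
    · simp [hy'_def, Function.update_of_ne hw]
  have hc1 : ∑ j : Fin m, r j * y j = c := hconst y heq
  have hc2 : ∑ j : Fin m, r j * y' j = c := by
    refine hconst y' ?_
    intro j
    rw [h1, h1]
    exact heq j
  have hdiff : ∑ j : Fin m, (r j * y' j - r j * y j) = r i * (ζ * y i) - r i * y i := by
    rw [Finset.sum_eq_single i ?h1 ?h2]
    · rw [hy'_def, Function.update_self]
    case h1 =>
      intro b _ hb
      rw [hy'_def, Function.update_of_ne hb, sub_self]
    case h2 =>
      exact fun h => absurd (Finset.mem_univ i) h
  rw [Finset.sum_sub_distrib, hc1, hc2, sub_self] at hdiff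
  have : r i * y i * (ζ - 1) = 0 := by linear_combination -hdiff
  rcases mul_eq_zero.mp this with h | h
  · rcases mul_eq_zero.mp h with h | h
    · exact h
    · exact absurd h (hyne i)
  · exact absurd (by linear_combination h) hζne
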